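/- arXiv:1910.06714 — 3 statements merged into one kernel-verified Lean document; each statement's English description precedes it below -/
import Mathlib

section
/- For every integer a with 2 ≤ a ≤ n, there does not exist an A^c_q-module of constant Jordan type [a]; i.e., no A-module M of dimension a restricts, for every nonzero λ ∈ k^c, to the single indecomposable k[u_λ]-module k[u_λ]/(u_λ^a). -/
noncomputable section

/-- The indecomposable module `k[x]/(x^t)` over the truncated polynomial ring. -/
abbrev Mt (k : Type) [Field k] (t : ℕ) : Type :=
  Polynomial k ⧸ Ideal.span {(Polynomial.X : Polynomial k) ^ t}

/-- Multiplication by `x` on `k[x]/(x^t)`, as a `k`-linear map. -/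
def xMul (k : Type) [Field k] (t : ℕ) : Mt k t →ₗ[k] Mt k t :=
  LinearMap.mulLeft k (Ideal.Quotient.mk _ Polynomial.X)

/-- The model module `⊕_{t=1}^{n} (k[x]/(x^t))^{d_t}`; here `t : Fin n` indexes the
block of size `t+1`, occurring with multiplicity `d t`. -/
abbrev MJ (k : Type) [Field k] (n : ℕ) (d : Fin n → ℕ) : Type :=
  ∀ t : Fin n, Fin (d t) → Mt k ((t : ℕ) + 1)

/-- The action of `x` on the model module `MJ k n d`. -/
def MJmap (k : Type) [Field k] (n : ℕ) (d : Fin n → ℕ) : MJ k n d →ₗ[k] MJ k n d where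
  toFun v t m := xMul k ((t : ℕ) + 1) (v t m)
  map_add' a b := by funext t m; exact (xMul k ((t : ℕ) + 1)).map_add (a t m) (b t m)
  map_smul' r a := by funext t m; exact (xMul k ((t : ℕ) + 1)).map_smul r (a t m)

/-- A `k`-vector space `V` with endomorphism `f` has Jordan type `[1]^{d 0} ⋯ [n]^{d (n-1)}`
if `(V, f)` is isomorphic to the model module `MJ k n d` with its `x`-action. -/
def HasJordanType {k : Type} [Field k] {V : Type} [AddCommGroup V] [Module k V]
    (n : ℕ) (f : V →ₗ[k] V) (d : Fin n → ℕ) : Prop :=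
  ∃ e : V ≃ₗ[k] MJ k n d, ∀ v, e (f v) = MJmap k n d (e v)

/-- The relations defining the quantum complete intersection `A_q^c`. -/
inductive QCIRel (k : Type) [Field k] (n c : ℕ) (q : k) :
    FreeAlgebra k (Fin c) → FreeAlgebra k (Fin c) → Prop
  | pow (i : Fin c) : QCIRel k n c q (FreeAlgebra.ι k i ^ n) 0
  | comm (i j : Fin c) (h : i < j) :
      QCIRel k n c q (FreeAlgebra.ι k i * FreeAlgebra.ι k j)
        (q • (FreeAlgebra.ι k j * FreeAlgebra.ι k i))

/-- The quantum complete intersection `A_q^c = k⟨x_1,…,x_c⟩/(x_i^n, x_i x_j - q x_j x_i)`. -/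
abbrev QCI (k : Type) [Field k] (n c : ℕ) (q : k) : Type := RingQuot (QCIRel k n c q)

/-- The generator `x_i` of `A_q^c`. -/
def QCI.X (k : Type) [Field k] (n c : ℕ) (q : k) (i : Fin c) : QCI k n c q :=
  RingQuot.mkAlgHom k (QCIRel k n c q) (FreeAlgebra.ι k i)

/-- The linear form `u_λ = λ_1 x_1 + ⋯ + λ_c x_c` in `A_q^c`. -/
def QCI.u (k : Type) [Field k] (n c : ℕ) (q : k) (lam : Fin c → k) : QCI k n c q :=
  ∑ i, lam i • QCI.X k n c q i

/-- `n' = n` if `char k = 0`, and `n' = n / gcd(n, char k)` otherwise. -/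
def nprime (k : Type) [Field k] (n : ℕ) : ℕ :=
  if ringChar k = 0 then n else n / Nat.gcd n (ringChar k)

/-- The Jacobson radical of `A_q^c`, as the two-sided ideal generated by `x_1, …, x_c`,
viewed as a `k`-subspace. -/
def QCI.rad (k : Type) [Field k] (n c : ℕ) (q : k) : Submodule k (QCI k n c q) :=
  Submodule.span k {a | ∃ (i : Fin c) (b b' : QCI k n c q), a = b * QCI.X k n c q i * b'}


namespace Aux

open Polynomial

variable {k : Type} [Field k]

def xb (k : Type) [Field k] (s : ℕ) : Mt k s :=
  Ideal.Quotient.mk (Ideal.span {(Polynomial.X : Polynomial k) ^ s}) Polynomial.X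

lemma xb_eq_mk (s : ℕ) : xb k s = Ideal.Quotient.mk _ (Polynomial.X : Polynomial k) := rfl

lemma xb_pow (s m : ℕ) :
    (xb k s) ^ m = Ideal.Quotient.mk (Ideal.span {(Polynomial.X : Polynomial k) ^ s}) (X ^ m) := by
  rw [xb, ← map_pow]

lemma xb_pow_eq_zero (s m : ℕ) (h : s ≤ m) : (xb k s) ^ m = 0 := by
  rw [xb_pow, Ideal.Quotient.eq_zero_iff_mem, Ideal.mem_span_singleton]
  exact pow_dvd_pow _ h

lemma xb_pow_ne_zero (s m : ℕ) (h : m < s) : (xb k s) ^ m ≠ 0 := by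
  intro hm
  rw [xb_pow, Ideal.Quotient.eq_zero_iff_mem, Ideal.mem_span_singleton] at hm
  have h1 : (X : Polynomial k) ^ m ≠ 0 := pow_ne_zero _ X_ne_zero
  have := Polynomial.natDegree_le_of_dvd hm h1
  simp [natDegree_X_pow] at this
  omega

lemma mem_span_xb_pow (s N : ℕ) (hsN : s ≤ N) (z : Mt k s) :
    z ∈ Submodule.span k (Set.range fun i : Fin N => (xb k s) ^ (i : ℕ)) := by
  obtain ⟨P, rfl⟩ := Ideal.Quotient.mk_surjective z
  set I := Ideal.span {(Polynomial.X : Polynomial k) ^ s} with hI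
  set M := max N (P.natDegree + 1) with hM
  have hPd : P.natDegree < M := lt_of_lt_of_le (Nat.lt_succ_self _) (le_max_right _ _)
  have hrep : Ideal.Quotient.mk I P
      = ∑ i ∈ Finset.range M, P.coeff i • (xb k s) ^ i := by
    conv_lhs => rw [P.as_sum_range' M hPd]
    rw [← Ideal.Quotient.mkₐ_eq_mk k I, map_sum]
    refine Finset.sum_congr rfl fun i _ => ?_
    rw [← smul_X_eq_monomial, map_smul, Ideal.Quotient.mkₐ_eq_mk k I, ← xb_pow]
  rw [hrep]
  refine Submodule.sum_mem _ fun i hi => ?_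
  by_cases h : i < N
  · exact Submodule.smul_mem _ _ (Submodule.subset_span ⟨⟨i, h⟩, rfl⟩)
  · rw [xb_pow_eq_zero s i (by omega), smul_zero]
    exact Submodule.zero_mem _

variable {n : ℕ} {d : Fin n → ℕ}

lemma MJmap_pow_apply (m : ℕ) (z : MJ k n d) (t : Fin n) (i : Fin (d t)) :
    (((MJmap k n d) ^ m) z) t i = (xb k ((t : ℕ) + 1)) ^ m * z t i := by
  induction m with
  | zero => simp
  | succ m ih =>
    rw [pow_succ', Module.End.mul_apply]
    have : (MJmap k n d) (((MJmap k n d) ^ m) z) t i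
        = xb k ((t : ℕ) + 1) * ((((MJmap k n d) ^ m) z) t i) := rfl
    rw [this, ih, ← mul_assoc, ← pow_succ']



lemma extract {k : Type} [Field k] {V : Type} [AddCommGroup V] [Module k V] {n a : ℕ}
    (ha2 : 2 ≤ a) (han : a ≤ n) {h : V →ₗ[k] V}
    (hJ : HasJordanType n h (fun t => if (t : ℕ) + 1 = a then 1 else 0)) :
    ∃ v : V, ((h ^ (a - 1)) v ≠ 0) ∧ (∀ x, (h ^ a) x = 0) ∧
      (∀ x : V, x ∈ Submodule.span k (Set.range fun i : Fin a => (h ^ (i : ℕ)) v)) := by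
  set d : Fin n → ℕ := fun t => if (t : ℕ) + 1 = a then 1 else 0 with hd
  obtain ⟨e, he⟩ := hJ
  have hepow : ∀ (m : ℕ) (x : V), e ((h ^ m) x) = ((MJmap k n d) ^ m) (e x) := by
    intro m
    induction m with
    | zero => intro x; simp
    | succ m ih =>
      intro x
      rw [pow_succ', Module.End.mul_apply, he, ih, pow_succ', Module.End.mul_apply]
  -- the distinguished component
  have ht0lt : a - 1 < n := by omega
  set t0 : Fin n := ⟨a - 1, ht0lt⟩ with ht0
  have ht0v : (t0 : ℕ) + 1 = a := by simp [ht0]; omega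
  have hdt0 : d t0 = 1 := by simp [hd, ht0v]
  set i0 : Fin (d t0) := ⟨0, by omega⟩ with hi0
  set w1 : MJ k n d := fun t i => 1 with hw1
  set v : V := e.symm w1 with hv
  have hev : e v = w1 := e.apply_symm_apply w1
  have hcomp : ∀ (m : ℕ), (((MJmap k n d) ^ m) w1) t0 i0 = (xb k ((t0 : ℕ) + 1)) ^ m := by
    intro m; rw [MJmap_pow_apply]; simp [hw1]
  refine ⟨v, ?_, ?_, ?_⟩
  · intro h0
    have : (((MJmap k n d) ^ (a - 1)) w1) t0 i0 = 0 := by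
      rw [← hev, ← hepow, h0, map_zero]; rfl
    rw [hcomp] at this
    exact xb_pow_ne_zero _ _ (by omega) this
  · intro x
    have hz : ((MJmap k n d) ^ a) (e x) = 0 := by
      funext t i
      have hdt : (t : ℕ) + 1 = a := by
        by_contra hne
        have : d t = 0 := by simp [hd, hne]
        exact absurd i.isLt (by omega)
      rw [MJmap_pow_apply, xb_pow_eq_zero _ _ (le_of_eq hdt), zero_mul]; rfl
    have h2 := hepow a x
    rw [hz] at h2
    apply e.injective
    rw [h2, map_zero]
  · intro x
    have hz : (e x) t0 i0 ∈ Submodule.span k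
        (Set.range fun i : Fin a => (xb k ((t0 : ℕ) + 1)) ^ (i : ℕ)) :=
      mem_span_xb_pow _ _ (by omega) _
    rw [Submodule.mem_span_range_iff_exists_fun] at hz
    obtain ⟨cf, hcf⟩ := hz
    have hrep : e x = ∑ i : Fin a, cf i • ((MJmap k n d) ^ (i : ℕ)) w1 := by
      funext t i
      have hdt : (t : ℕ) + 1 = a := by
        by_contra hne
        have hd0 : d t = 0 := by simp [hd, hne]
        exact absurd i.isLt (by omega)
      have htt0 : t = t0 := by
        apply Fin.ext; simp [ht0]; omega
      subst htt0
      have hii0 : i = i0 := by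
        have h1 : (i : ℕ) < 1 := lt_of_lt_of_eq i.isLt hdt0
        apply Fin.ext
        simp only [hi0]
        omega
      subst hii0
      have hR : (∑ j : Fin a, cf j • ((MJmap k n d) ^ (j : ℕ)) w1) t0 i0
          = ∑ j : Fin a, cf j • ((xb k ((t0 : ℕ) + 1)) ^ (j : ℕ)) := by
        rw [Finset.sum_apply, Finset.sum_apply]
        refine Finset.sum_congr rfl fun j _ => ?_
        rw [Pi.smul_apply, Pi.smul_apply, hcomp]
      rw [hR, hcf]
    have : x = ∑ i : Fin a, cf i • (h ^ (i : ℕ)) v := by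
      apply e.injective
      rw [hrep, map_sum]
      refine Finset.sum_congr rfl fun i _ => ?_
      rw [map_smul, hepow, hev]
    rw [this]
    exact Submodule.sum_mem _ fun i _ =>
      Submodule.smul_mem _ _ (Submodule.subset_span ⟨i, rfl⟩)

end Aux

namespace Aux

variable {k : Type} [Field k] {V : Type} [AddCommGroup V] [Module k V]

lemma comm_pow {f g : V →ₗ[k] V} {r : k} (hgf : ∀ x, g (f x) = r • f (g x)) :
    ∀ (j : ℕ) (x : V), g ((f ^ j) x) = r ^ j • (f ^ j) (g x) := by
  intro j
  induction j with
  | zero => intro x; simp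
  | succ j ih =>
    intro x
    rw [pow_succ, Module.End.mul_apply, ih (f x), hgf x, map_smul, smul_smul, ← pow_succ,
      Module.End.mul_apply]

lemma g_range {f g : V →ₗ[k] V} {r : k} (hgf : ∀ x, g (f x) = r • f (g x))
    {a : ℕ} {v : V}
    (hspan : ∀ x : V, x ∈ Submodule.span k (Set.range fun i : Fin a => (f ^ (i : ℕ)) v))
    {m : ℕ} (hgv : g v ∈ LinearMap.range (f ^ m)) :
    ∀ x, g x ∈ LinearMap.range (f ^ m) := by
  intro x
  have hle : Submodule.span k (Set.range fun i : Fin a => (f ^ (i : ℕ)) v)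
      ≤ Submodule.comap g (LinearMap.range (f ^ m)) := by
    rw [Submodule.span_le]
    rintro _ ⟨i, rfl⟩
    simp only [SetLike.mem_coe, Submodule.mem_comap]
    rw [comm_pow hgf]
    obtain ⟨y, hy⟩ := hgv
    rw [← hy]
    refine Submodule.smul_mem _ _ ⟨(f ^ (i : ℕ)) y, ?_⟩
    rw [← Module.End.mul_apply, ← Module.End.mul_apply, ← pow_add, ← pow_add, Nat.add_comm]
  exact hle (hspan x)

lemma tail_mem (f : V →ₗ[k] V) {a : ℕ} (m : ℕ) (v : V) (cf : Fin a → k) :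
    (∑ i ∈ Finset.univ.filter (fun i : Fin a => m ≤ (i : ℕ)), cf i • (f ^ (i : ℕ)) v)
      ∈ LinearMap.range (f ^ m) := by
  refine Submodule.sum_mem _ fun i hi => ?_
  rw [Finset.mem_filter] at hi
  refine Submodule.smul_mem _ _ ⟨(f ^ ((i : ℕ) - m)) v, ?_⟩
  rw [← Module.End.mul_apply, ← pow_add, Nat.add_sub_cancel' hi.2]

end Aux

lemma Aux.u_two (k : Type) [Field k] (n c : ℕ) (q : k) (i0 i1 : Fin c) (hne : i0 ≠ i1)
    (s t : k) :
    QCI.u k n c q (fun i => if i = i0 then s else if i = i1 then t else 0)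
      = s • QCI.X k n c q i0 + t • QCI.X k n c q i1 := by
  unfold QCI.u
  rw [← Finset.sum_subset (Finset.subset_univ {i0, i1})]
  · rw [Finset.sum_pair hne]
    simp [hne, Ne.symm hne]
  · intro x _ hx
    simp only [Finset.mem_insert, Finset.mem_singleton] at hx
    push_neg at hx
    simp [hx.1, hx.2]


theorem stmt14 (k : Type) [Field k] (n c : ℕ) (hn : 2 ≤ n) (hc : 2 ≤ c) (q : k)
    (hq : IsPrimitiveRoot q (nprime k n)) (a : ℕ) (ha2 : 2 ≤ a) (han : a ≤ n)
    (V : Type) [AddCommGroup V] [Module k V]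
    (rho : QCI k n c q →ₐ[k] Module.End k V) :
    ¬ ∀ lam : Fin c → k, lam ≠ 0 →
        HasJordanType n (rho (QCI.u k n c q lam))
          (fun t => if (t : ℕ) + 1 = a then 1 else 0) := by
  intro H
  -- q is nonzero
  have hnp : 0 < nprime k n := by
    unfold nprime
    split
    · omega
    · have hg0 : Nat.gcd n (ringChar k) ≠ 0 := fun h => by
        have := (Nat.gcd_eq_zero_iff.mp h).1; omega
      exact Nat.div_pos (Nat.le_of_dvd (by omega) (Nat.gcd_dvd_left n _))
        (Nat.pos_of_ne_zero hg0)
  have hq0 : q ≠ 0 := by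
    intro h0
    have hq1 := hq.pow_eq_one
    rw [h0, zero_pow (by omega)] at hq1
    exact one_ne_zero hq1.symm
  -- the two generators
  set i0 : Fin c := ⟨0, by omega⟩ with hi0
  set i1 : Fin c := ⟨1, by omega⟩ with hi1
  have hi01 : i0 < i1 := by rw [hi0, hi1]; exact Fin.mk_lt_mk.mpr (by omega)
  have hne01 : i0 ≠ i1 := ne_of_lt hi01
  set f := rho (QCI.X k n c q i0) with hf
  set g := rho (QCI.X k n c q i1) with hg
  -- the commutation relation
  have hrelQ : QCI.X k n c q i0 * QCI.X k n c q i1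
      = q • (QCI.X k n c q i1 * QCI.X k n c q i0) := by
    unfold QCI.X
    rw [← map_mul, ← map_mul, ← map_smul]
    exact RingQuot.mkAlgHom_rel k (QCIRel.comm i0 i1 hi01)
  have hrel : f * g = q • (g * f) := by
    rw [hf, hg, ← map_mul, hrelQ, map_smul, map_mul]
  have hfg : ∀ x, f (g x) = q • g (f x) := by
    intro x
    have := LinearMap.ext_iff.mp hrel x
    simpa [Module.End.mul_apply] using this
  have hgf : ∀ x, g (f x) = q⁻¹ • f (g x) := by
    intro x
    rw [hfg x, smul_smul, inv_mul_cancel₀ hq0, one_smul]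
  -- Jordan type of f
  have hJf : HasJordanType n f (fun t => if (t : ℕ) + 1 = a then 1 else 0) := by
    have hlam : (fun i => if i = i0 then (1 : k) else if i = i1 then 0 else 0) ≠ 0 := by
      intro h0
      have := congrFun h0 i0
      simp at this
    have h1 := H _ hlam
    rwa [show rho (QCI.u k n c q (fun i => if i = i0 then (1:k) else if i = i1 then 0 else 0))
        = f by rw [Aux.u_two k n c q i0 i1 hne01, map_add, map_smul, map_smul, ← hf, ← hg];
               simp] at h1
  have hJg : HasJordanType n g (fun t => if (t : ℕ) + 1 = a then 1 else 0) := by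
    have hlam : (fun i => if i = i0 then (0 : k) else if i = i1 then 1 else 0) ≠ 0 := by
      intro h0
      have := congrFun h0 i1
      simp at this
      exact hne01 this.symm
    have h1 := H _ hlam
    rwa [show rho (QCI.u k n c q (fun i => if i = i0 then (0:k) else if i = i1 then 1 else 0))
        = g by rw [Aux.u_two k n c q i0 i1 hne01, map_add, map_smul, map_smul, ← hf, ← hg];
               simp] at h1
  obtain ⟨v, hfv, hfa, hspan⟩ := Aux.extract ha2 han hJf
  obtain ⟨vg, hgv', hga, -⟩ := Aux.extract ha2 han hJg
  -- decompose g v in terms of the basis-like family f^i v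
  obtain ⟨cf, hcf⟩ : ∃ cf : Fin a → k, ∑ i, cf i • (f ^ (i : ℕ)) v = g v :=
    (Submodule.mem_span_range_iff_exists_fun k).mp (hspan (g v))
  set z0 : Fin a := ⟨0, by omega⟩ with hz0
  set z1 : Fin a := ⟨1, by omega⟩ with hz1
  set c0 : k := cf z0 with hc0def
  set β : k := cf z1 with hβdef
  -- head/tail splittings
  have hfilter1 : Finset.univ.filter (fun i : Fin a => ¬ 1 ≤ (i : ℕ)) = {z0} := by
    ext i
    simp [hz0, Fin.ext_iff]
  have hsplit1 : g v - c0 • v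
      = ∑ i ∈ Finset.univ.filter (fun i : Fin a => 1 ≤ (i : ℕ)), cf i • (f ^ (i : ℕ)) v := by
    have hsum := Finset.sum_filter_add_sum_filter_not Finset.univ
      (fun i : Fin a => 1 ≤ (i : ℕ)) (fun i => cf i • (f ^ (i : ℕ)) v)
    rw [hfilter1, Finset.sum_singleton, hcf] at hsum
    rw [← hsum, hc0def]
    simp [hz0]
  have hw1 : g v - c0 • v ∈ LinearMap.range (f ^ 1) := by
    rw [hsplit1]; exact Aux.tail_mem f 1 v cf
  have hfilter2 : Finset.univ.filter (fun i : Fin a => ¬ 2 ≤ (i : ℕ)) = {z0, z1} := by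
    ext i
    simp [hz0, hz1, Fin.ext_iff]
    omega
  have hsplit2 : g v - c0 • v - β • f v
      = ∑ i ∈ Finset.univ.filter (fun i : Fin a => 2 ≤ (i : ℕ)), cf i • (f ^ (i : ℕ)) v := by
    have hsum := Finset.sum_filter_add_sum_filter_not Finset.univ
      (fun i : Fin a => 2 ≤ (i : ℕ)) (fun i => cf i • (f ^ (i : ℕ)) v)
    rw [hfilter2, Finset.sum_pair (by rw [hz0, hz1]; simp [Fin.ext_iff]), hcf] at hsum
    rw [← hsum, hc0def, hβdef]
    simp [pow_one, hz0, hz1]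
    abel
  have hw2 : g v - c0 • v - β • f v ∈ LinearMap.range (f ^ 2) := by
    rw [hsplit2]; exact Aux.tail_mem f 2 v cf
  -- c0 = 0
  have hgr1 : ∀ y, g (f y) ∈ LinearMap.range (f ^ 1) :=
    fun y => ⟨q⁻¹ • g y, by rw [pow_one, map_smul, ← hgf]⟩
  have hc0ind : ∀ m : ℕ, (g ^ m) v - c0 ^ m • v ∈ LinearMap.range (f ^ 1) := by
    intro m
    induction m with
    | zero => simpa using Submodule.zero_mem _
    | succ m ih =>
      have key : (g ^ (m + 1)) v - c0 ^ (m + 1) • v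
          = g ((g ^ m) v - c0 ^ m • v) + c0 ^ m • (g v - c0 • v) := by
        rw [pow_succ', Module.End.mul_apply, map_sub, map_smul, smul_sub, smul_smul, ← pow_succ]
        abel
      rw [key]
      refine Submodule.add_mem _ ?_ (Submodule.smul_mem _ _ hw1)
      obtain ⟨y, hy⟩ := ih
      rw [← hy, pow_one]
      exact hgr1 y
  have hc0 : c0 = 0 := by
    by_contra hne
    have h1 := hc0ind a
    rw [hga v, zero_sub] at h1
    have h2 := Submodule.neg_mem _ h1
    rw [neg_neg] at h2
    have hvr : v ∈ LinearMap.range (f ^ 1) := by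
      have h3 := Submodule.smul_mem _ (c0 ^ a)⁻¹ h2
      rwa [smul_smul, inv_mul_cancel₀ (pow_ne_zero a hne), one_smul] at h3
    obtain ⟨y, hy⟩ := hvr
    apply hfv
    rw [← hy, pow_one, ← Module.End.mul_apply, ← pow_succ, show a - 1 + 1 = a by omega]
    exact hfa y
  have hgv1 : g v ∈ LinearMap.range (f ^ 1) := by
    have := hw1; rwa [hc0, zero_smul, sub_zero] at this
  have hr2 : g v - β • f v ∈ LinearMap.range (f ^ 2) := by
    have := hw2; rwa [hc0, zero_smul, sub_zero] at this
  -- β ≠ 0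
  have hβ : β ≠ 0 := by
    intro h0
    have hgv2 : g v ∈ LinearMap.range (f ^ 2) := by
      have := hr2; rwa [h0, zero_smul, sub_zero] at this
    have hg2 : ∀ x, g x ∈ LinearMap.range (f ^ 2) := Aux.g_range hgf hspan hgv2
    have hpow2 : ∀ (m : ℕ) (x : V), (g ^ m) x ∈ LinearMap.range (f ^ (2 * m)) := by
      intro m
      induction m with
      | zero => intro x; exact ⟨x, by simp⟩
      | succ m ih =>
        intro x
        rw [pow_succ', Module.End.mul_apply]
        obtain ⟨y, hy⟩ := ih x
        rw [← hy, Aux.comm_pow hgf]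
        obtain ⟨y2, hy2⟩ := hg2 y
        rw [← hy2]
        refine Submodule.smul_mem _ _ ⟨y2, ?_⟩
        rw [← Module.End.mul_apply, ← pow_add, show 2 * (m + 1) = 2 * m + 2 by ring]
    obtain ⟨y, hy⟩ := hpow2 (a - 1) vg
    apply hgv'
    rw [← hy, show 2 * (a - 1) = a + (a - 2) by omega, pow_add, Module.End.mul_apply]
    exact hfa _
  -- the final linear form
  set t : k := -β⁻¹ with ht
  set u : Module.End k V := f + t • g with hu
  have hJu : HasJordanType n u (fun t => if (t : ℕ) + 1 = a then 1 else 0) := by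
    have hlam : (fun i => if i = i0 then (1 : k) else if i = i1 then t else 0) ≠ 0 := by
      intro h0
      have := congrFun h0 i0
      simp at this
    have h1 := H _ hlam
    rwa [show rho (QCI.u k n c q (fun i => if i = i0 then (1:k) else if i = i1 then t else 0))
        = u by rw [Aux.u_two k n c q i0 i1 hne01, map_add, map_smul, map_smul, ← hf, ← hg, hu];
               simp] at h1
  obtain ⟨vu, huv, -, -⟩ := Aux.extract ha2 han hJu
  -- g maps everything into range f
  have hgx1 : ∀ x, g x ∈ LinearMap.range (f ^ 1) := Aux.g_range hgf hspan hgv1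
  -- u raises the filtration
  have hustep : ∀ (j : ℕ) (x : V), x ∈ LinearMap.range (f ^ j) →
      u x ∈ LinearMap.range (f ^ (j + 1)) := by
    intro j x hx
    obtain ⟨y, hy⟩ := hx
    rw [← hy]
    have hux : u ((f ^ j) y) = f ((f ^ j) y) + t • g ((f ^ j) y) := by
      rw [hu]; simp
    rw [hux]
    refine Submodule.add_mem _ ⟨y, by rw [pow_succ', Module.End.mul_apply]⟩ ?_
    rw [Aux.comm_pow hgf]
    refine Submodule.smul_mem _ _ (Submodule.smul_mem _ _ ?_)
    obtain ⟨y2, hy2⟩ := hgx1 y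
    rw [← hy2, pow_one]
    exact ⟨y2, by rw [pow_succ, Module.End.mul_apply]⟩
  -- u v lands two steps deep
  have huv2 : u v ∈ LinearMap.range (f ^ 2) := by
    have hid : u v = (1 + t * β) • f v + t • (g v - β • f v) := by
      rw [hu]
      simp only [LinearMap.add_apply, LinearMap.smul_apply]
      rw [smul_sub, smul_smul, add_smul, one_smul, mul_smul]
      abel
    have hzero : (1 : k) + t * β = 0 := by
      rw [ht]
      field_simp
      norm_num
    rw [hid, hzero, zero_smul, zero_add]
    exact Submodule.smul_mem _ _ hr2
  have claimA : ∀ m : ℕ, 1 ≤ m → (u ^ m) v ∈ LinearMap.range (f ^ (m + 1)) := by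
    intro m hm
    induction m, hm using Nat.le_induction with
    | base => rw [pow_one]; exact huv2
    | succ m hm ih =>
      rw [show u ^ (m + 1) = u * u ^ m from pow_succ' u m, Module.End.mul_apply]
      exact hustep _ _ ih
  have claimB : ∀ (m j : ℕ) (x : V), x ∈ LinearMap.range (f ^ j) →
      (u ^ m) x ∈ LinearMap.range (f ^ (j + m)) := by
    intro m
    induction m with
    | zero => intro j x hx; simpa using hx
    | succ m ih =>
      intro j x hx
      rw [show u ^ (m + 1) = u * u ^ m from pow_succ' u m, Module.End.mul_apply]
      exact hustep _ _ (ih j x hx)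
  -- conclude
  apply huv
  have hker : Submodule.span k (Set.range fun i : Fin a => (f ^ (i : ℕ)) v)
      ≤ LinearMap.ker (u ^ (a - 1)) := by
    rw [Submodule.span_le]
    rintro _ ⟨i, rfl⟩
    simp only [SetLike.mem_coe, LinearMap.mem_ker]
    by_cases hiz : (i : ℕ) = 0
    · rw [hiz, pow_zero, Module.End.one_apply]
      obtain ⟨y, hy⟩ := claimA (a - 1) (by omega)
      rw [← hy, show a - 1 + 1 = a by omega]
      exact hfa y
    · have hmem : (f ^ (i : ℕ)) v ∈ LinearMap.range (f ^ 1) :=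
        ⟨(f ^ ((i : ℕ) - 1)) v, by
          rw [← Module.End.mul_apply, ← pow_add, show 1 + ((i : ℕ) - 1) = (i : ℕ) by omega]⟩
      obtain ⟨y, hy⟩ := claimB (a - 1) 1 _ hmem
      rw [← hy, show 1 + (a - 1) = a by omega]
      exact hfa y
  exact LinearMap.mem_ker.mp (hker (hspan vu))


end
end

section
/- Let A = A^c_q with q ≠ ±1 (so n ≥ 3). Every k-algebra automorphism ψ of A that maps each generator x_j to a linear combination of x_1,…,x_c must map each x_i to a nonzero scalar multiple of x_i itself. -/
noncomputable section

namespace QAux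

variable {k : Type} [Field k] {n c : ℕ} {q : k}

def Aex (i : Fin c) (m : Fin c → ℕ) : ℕ :=
  ∑ l ∈ Finset.univ.filter (fun l => i < l), m l

def Xop (n : ℕ) (q : k) (i : Fin c) :
    ((Fin c → ℕ) → k) →ₗ[k] ((Fin c → ℕ) → k) where
  toFun f m := if 0 < m i ∧ m i < n then q ^ Aex i m * f (Function.update m i (m i - 1)) else 0
  map_add' f g := by
    funext m
    by_cases h : 0 < m i ∧ m i < n <;> simp [h, mul_add]
  map_smul' r f := by
    funext m
    by_cases h : 0 < m i ∧ m i < n <;> simp [h]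
    ring

lemma Xop_apply (i : Fin c) (f : (Fin c → ℕ) → k) (m : Fin c → ℕ) :
    Xop n q i f m =
      if 0 < m i ∧ m i < n then q ^ Aex i m * f (Function.update m i (m i - 1)) else 0 := rfl

lemma Aex_update_le {i j : Fin c} (h : i ≤ j) (m : Fin c → ℕ) (v : ℕ) :
    Aex j (Function.update m i v) = Aex j m := by
  refine Finset.sum_congr rfl fun l hl => ?_
  simp only [Finset.mem_filter] at hl
  exact Function.update_of_ne (by exact (lt_of_le_of_lt h hl.2).ne') v m

lemma Aex_update_gt {i j : Fin c} (h : i < j) (m : Fin c → ℕ) (hm : 0 < m j) :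
    Aex i (Function.update m j (m j - 1)) + 1 = Aex i m := by
  have hj : j ∈ Finset.univ.filter (fun l => i < l) := by
    simp [h]
  unfold Aex
  rw [← Finset.add_sum_erase _ _ hj, ← Finset.add_sum_erase _ m hj]
  have : ∑ l ∈ (Finset.univ.filter (fun l => i < l)).erase j,
      Function.update m j (m j - 1) l = ∑ l ∈ (Finset.univ.filter (fun l => i < l)).erase j, m l := by
    refine Finset.sum_congr rfl fun l hl => ?_
    exact Function.update_of_ne (Finset.ne_of_mem_erase hl) _ m
  rw [this, Function.update_self]
  omega

lemma Xop_pow_zero (i : Fin c) :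
    ∀ (t : ℕ) (f : (Fin c → ℕ) → k) (m : Fin c → ℕ),
      (m i < t ∨ (n ≤ m i ∧ 1 ≤ t)) → ((Xop n q i) ^ t) f m = 0 := by
  intro t
  induction t with
  | zero => intro f m hm; omega
  | succ t ih =>
    intro f m hm
    rw [pow_succ', Module.End.mul_apply, Xop_apply]
    by_cases h : 0 < m i ∧ m i < n
    · rw [if_pos h]
      have : ((Xop n q i) ^ t) f (Function.update m i (m i - 1)) = 0 := by
        apply ih
        left
        rw [Function.update_self]
        omega
      rw [this, mul_zero]
    · rw [if_neg h]

lemma Xop_pow_n (hn : 1 ≤ n) (i : Fin c) : (Xop n q i : Module.End k _) ^ n = 0 := by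
  apply LinearMap.ext; intro f; funext m
  rw [Xop_pow_zero i n f m (by omega)]
  rfl

lemma Xop_comm {i j : Fin c} (hij : i < j) :
    (Xop n q i : Module.End k _) * Xop n q j = q • ((Xop n q j : Module.End k _) * Xop n q i) := by
  have hne : i ≠ j := hij.ne
  apply LinearMap.ext; intro f; funext m
  rw [Module.End.mul_apply, LinearMap.smul_apply, Module.End.mul_apply, Pi.smul_apply,
    Xop_apply, Xop_apply, Xop_apply, Xop_apply]
  by_cases hi : 0 < m i ∧ m i < n
  · by_cases hj : 0 < m j ∧ m j < n
    · rw [if_pos hi, if_pos hj]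
      rw [if_pos (by rwa [Function.update_of_ne hne.symm]),
        if_pos (by rwa [Function.update_of_ne hne])]
      rw [Function.update_of_ne hne.symm, Function.update_of_ne hne]
      rw [Function.update_comm hne]
      rw [Aex_update_le hij.le m (m i - 1)]
      rw [← Aex_update_gt hij m hj.1]
      have h1 : 0 < m j := hj.1
      rw [smul_eq_mul]
      ring
    · rw [if_neg hj, if_pos hi]
      rw [if_neg (by rwa [Function.update_of_ne hne.symm])]
      simp
  · rw [if_neg hi]
    by_cases hj : 0 < m j ∧ m j < n
    · rw [if_pos hj, if_neg (by rwa [Function.update_of_ne hne])]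
      simp
    · rw [if_neg hj]
      simp

/-- The representation of `A_q^c` on functions on multidegrees. -/
def phi (n c : ℕ) (q : k) (hn : 1 ≤ n) :
    QCI k n c q →ₐ[k] Module.End k ((Fin c → ℕ) → k) :=
  RingQuot.liftAlgHom k ⟨FreeAlgebra.lift k (fun i => (Xop n q i : Module.End k _)), by
    rintro x y (⟨i⟩ | ⟨i, j, hlt⟩)
    · rw [map_pow, map_zero, FreeAlgebra.lift_ι_apply, Xop_pow_n hn]
    · rw [map_mul, map_smul, map_mul, FreeAlgebra.lift_ι_apply, FreeAlgebra.lift_ι_apply,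
        Xop_comm hlt]⟩

lemma phi_X (hn : 1 ≤ n) (i : Fin c) :
    phi n c q hn (QCI.X k n c q i) = Xop n q i := by
  rw [QCI.X, phi, RingQuot.liftAlgHom_mkAlgHom_apply, FreeAlgebra.lift_ι_apply]

def indic (m0 : Fin c → ℕ) : (Fin c → ℕ) → k := fun m => if m = m0 then 1 else 0

lemma indic_apply (m0 m : Fin c → ℕ) : (indic m0 : (Fin c → ℕ) → k) m = if m = m0 then 1 else 0 := rfl

def d1 (a : Fin c) : Fin c → ℕ := fun l => if l = a then 1 else 0

lemma Xop_indic (i : Fin c) (m0 : Fin c → ℕ) (h : m0 i + 1 < n) :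
    Xop n q i (indic m0 : (Fin c → ℕ) → k) = q ^ Aex i m0 • indic (m0 + d1 i) := by
  funext m
  rw [Xop_apply, Pi.smul_apply, smul_eq_mul]
  have hmi : (m0 + d1 i) i = m0 i + 1 := by simp [d1]
  by_cases hm : m = m0 + d1 i
  · subst hm
    rw [if_pos (by rw [hmi]; omega)]
    have hupd : Function.update (m0 + d1 i) i ((m0 + d1 i) i - 1) = m0 := by
      funext l
      by_cases hl : l = i
      · subst hl; rw [Function.update_self, hmi]; omega
      · rw [Function.update_of_ne hl]; simp [d1, hl]
    rw [hupd]
    have hA : Aex i (m0 + d1 i) = Aex i m0 := by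
      refine Finset.sum_congr rfl fun l hl => ?_
      simp only [Finset.mem_filter] at hl
      simp [d1, hl.2.ne']
    rw [hA, indic_apply, indic_apply, if_pos rfl, if_pos rfl, mul_one]
  · have hrhs : (indic (m0 + d1 i) : (Fin c → ℕ) → k) m = 0 := by
      rw [indic_apply, if_neg hm]
    rw [hrhs, mul_zero]
    by_cases hg : 0 < m i ∧ m i < n
    · rw [if_pos hg]
      have hz : (indic m0 : (Fin c → ℕ) → k) (Function.update m i (m i - 1)) = 0 := by
        rw [indic_apply, if_neg]
        intro h0
        apply hm
        funext l
        by_cases hl : l = i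
        · subst hl
          have h1 := congrFun h0 l
          rw [Function.update_self] at h1
          rw [hmi]
          omega
        · have h1 := congrFun h0 l
          rw [Function.update_of_ne hl] at h1
          rw [h1]
          simp [d1, hl]
      rw [hz, mul_zero]
    · rw [if_neg hg]

lemma Aex_zero (i : Fin c) : Aex i (0 : Fin c → ℕ) = 0 :=
  Finset.sum_eq_zero fun _ _ => rfl

lemma Xop_indic_zero (hn2 : 2 ≤ n) (t : Fin c) :
    Xop n q t (indic 0 : (Fin c → ℕ) → k) = indic (d1 t) := by
  rw [Xop_indic t 0 (by simpa using by omega), Aex_zero, pow_zero, one_smul, zero_add]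

lemma Aex_d1 (s t : Fin c) : Aex s (d1 t) = if s < t then 1 else 0 := by
  unfold Aex d1
  rw [Finset.sum_ite_eq' (Finset.univ.filter (fun l => s < l)) t (fun _ => 1)]
  simp

lemma Xop_Xop (hn3 : 3 ≤ n) (s t : Fin c) :
    Xop n q s (Xop n q t (indic 0 : (Fin c → ℕ) → k)) =
      q ^ (if s < t then 1 else 0) • indic (d1 s + d1 t) := by
  rw [Xop_indic_zero (by omega) t, Xop_indic s (d1 t) (by simp only [d1]; split <;> omega),
    Aex_d1, add_comm (d1 t)]

lemma d1_inj {a b : Fin c} (h : (d1 a : Fin c → ℕ) = d1 b) : a = b := by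
  by_contra hab
  have h1 := congrFun h a
  simp [d1, hab] at h1

lemma d1_add_inj {s t a b : Fin c} (h : (d1 s + d1 t : Fin c → ℕ) = d1 a + d1 b) :
    (s = a ∧ t = b) ∨ (s = b ∧ t = a) := by
  by_cases hsa : s = a
  · subst hsa
    exact Or.inl ⟨rfl, d1_inj (add_left_cancel h)⟩
  · by_cases hsb : s = b
    · subst hsb
      rw [add_comm (d1 a)] at h
      exact Or.inr ⟨rfl, d1_inj (add_left_cancel h)⟩
    · exfalso
      have h1 := congrFun h s
      simp only [d1, Pi.add_apply] at h1
      simp only [if_true, eq_self_iff_true, if_neg hsa, if_neg hsb] at h1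
      split at h1 <;> omega

/-- The coefficient-extraction functional. -/
def lam (n c : ℕ) (q : k) (hn : 1 ≤ n) (p : Fin c → ℕ) : QCI k n c q →ₗ[k] k where
  toFun y := phi n c q hn y (indic 0) p
  map_add' y z := by
    simp only [map_add, LinearMap.add_apply, Pi.add_apply]
  map_smul' r y := by
    simp only [map_smul, LinearMap.smul_apply, Pi.smul_apply, RingHom.id_apply, smul_eq_mul]

lemma lam_apply (hn : 1 ≤ n) (p : Fin c → ℕ) (y : QCI k n c q) :
    lam n c q hn p y = phi n c q hn y (indic 0) p := rfl

lemma lam_X (hn : 1 ≤ n) (hn2 : 2 ≤ n) (a b : Fin c) :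
    lam n c q hn (d1 b) (QCI.X k n c q a) = if a = b then 1 else 0 := by
  rw [lam_apply, phi_X, Xop_indic_zero hn2, indic_apply]
  by_cases hab : a = b
  · subst hab; rw [if_pos rfl, if_pos rfl]
  · rw [if_neg (fun h => hab (d1_inj h).symm), if_neg hab]

lemma lam_XX (hn : 1 ≤ n) (hn3 : 3 ≤ n) (s t a b : Fin c) :
    lam n c q hn (d1 a + d1 b) (QCI.X k n c q s * QCI.X k n c q t) =
      if (s = a ∧ t = b) ∨ (s = b ∧ t = a) then q ^ (if s < t then 1 else 0) else 0 := by
  rw [lam_apply, map_mul, Module.End.mul_apply, phi_X, phi_X, Xop_Xop hn3,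
    Pi.smul_apply, smul_eq_mul, indic_apply]
  have hcond : ((d1 a + d1 b : Fin c → ℕ) = d1 s + d1 t) ↔ ((s = a ∧ t = b) ∨ (s = b ∧ t = a)) := by
    constructor
    · exact fun h => d1_add_inj h.symm
    · rintro (⟨rfl, rfl⟩ | ⟨rfl, rfl⟩)
      · rfl
      · exact add_comm _ _
  rw [if_congr hcond rfl rfl, mul_ite, mul_one, mul_zero]

lemma double_sum_eval {a b : Fin c} (hab : a ≠ b) (g : Fin c → Fin c → k) :
    (∑ s, ∑ t, if (s = a ∧ t = b) ∨ (s = b ∧ t = a) then g s t else 0) = g a b + g b a := by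
  have key : ∀ s t : Fin c, (if (s = a ∧ t = b) ∨ (s = b ∧ t = a) then g s t else 0)
      = (if t = b then (if s = a then g s t else 0) else 0)
        + (if t = a then (if s = b then g s t else 0) else 0) := by
    intro s t
    by_cases hsa : s = a <;> by_cases hsb : s = b <;> by_cases htb : t = b <;>
      by_cases hta : t = a <;> simp_all
  simp only [key, Finset.sum_add_distrib, Finset.sum_ite_eq', Finset.mem_univ, if_true]

lemma double_sum_eval_diag (a : Fin c) (g : Fin c → Fin c → k) :
    (∑ s, ∑ t, if (s = a ∧ t = a) ∨ (s = a ∧ t = a) then g s t else 0) = g a a := by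
  have key : ∀ s t : Fin c, (if (s = a ∧ t = a) ∨ (s = a ∧ t = a) then g s t else 0)
      = (if t = a then (if s = a then g s t else 0) else 0) := by
    intro s t
    by_cases hsa : s = a <;> by_cases hta : t = a <;> simp_all
  simp only [key, Finset.sum_ite_eq', Finset.mem_univ, if_true]

lemma sum_two {a b : Fin c} (hab : a ≠ b) (F G : Fin c → k) :
    (∑ x, (if x = a then F x else if x = b then G x else 0)) = F a + G b := by
  have key : ∀ x : Fin c, (if x = a then F x else if x = b then G x else 0)
      = (if x = a then F x else 0) + (if x = b then G x else 0) := by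
    intro x
    by_cases hxa : x = a <;> by_cases hxb : x = b <;> simp_all
  simp only [key, Finset.sum_add_distrib, Finset.sum_ite_eq', Finset.mem_univ, if_true]

end QAux

theorem stmt17 (k : Type) [Field k] (n c : ℕ) (hn : 2 ≤ n) (hc : 2 ≤ c) (q : k)
    (hq : IsPrimitiveRoot q (nprime k n)) (hq1 : q ≠ 1) (hqm1 : q ≠ -1)
    (psi : QCI k n c q ≃ₐ[k] QCI k n c q)
    (hpsi : ∀ j : Fin c, ∃ α : Fin c → k,
      psi (QCI.X k n c q j) = ∑ i, α i • QCI.X k n c q i) :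
    ∀ i : Fin c, ∃ α : k, α ≠ 0 ∧ psi (QCI.X k n c q i) = α • QCI.X k n c q i := by
  classical
  -- `n ≥ 3`
  have hdvd : nprime k n ∣ n := by
    unfold nprime
    split
    · exact dvd_rfl
    · exact Nat.div_dvd_of_dvd (Nat.gcd_dvd_left n (ringChar k))
  have hpow : q ^ nprime k n = 1 := hq.pow_eq_one
  have hq2 : q * q ≠ 1 := by
    intro h
    rcases mul_self_eq_one_iff.mp h with h1 | h1
    · exact hq1 h1
    · exact hqm1 h1
  have hn3 : 3 ≤ n := by
    have h0 : nprime k n ≠ 0 := by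
      intro h
      rw [h] at hdvd
      have := Nat.eq_zero_of_zero_dvd hdvd
      omega
    have h1 : nprime k n ≠ 1 := by
      intro h
      rw [h, pow_one] at hpow
      exact hq1 hpow
    have h2 : nprime k n ≠ 2 := by
      intro h
      rw [h, pow_two] at hpow
      exact hq2 hpow
    have := Nat.le_of_dvd (by omega) hdvd
    omega
  have hn1 : 1 ≤ n := by omega
  have hn2 : 2 ≤ n := by omega
  choose α hα using hpsi
  -- the commutation relation holds in `QCI`
  have hrel : ∀ i j : Fin c, i < j →
      QCI.X k n c q i * QCI.X k n c q j = q • (QCI.X k n c q j * QCI.X k n c q i) := by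
    intro i j h
    have h0 := RingQuot.mkAlgHom_rel k (QCIRel.comm (k := k) (n := n) (q := q) i j h)
    rw [map_mul, map_smul, map_mul] at h0
    exact h0
  have hcomm : ∀ i j : Fin c, i < j →
      psi (QCI.X k n c q i) * psi (QCI.X k n c q j) =
        q • (psi (QCI.X k n c q j) * psi (QCI.X k n c q i)) := by
    intro i j h
    rw [← map_mul, ← map_mul, ← map_smul, hrel i j h]
  -- expansion of products of images under the functional
  have hexp : ∀ (i j : Fin c) (p : Fin c → ℕ),
      QAux.lam n c q hn1 p (psi (QCI.X k n c q i) * psi (QCI.X k n c q j)) =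
        ∑ s, ∑ t, α i s * α j t * QAux.lam n c q hn1 p (QCI.X k n c q s * QCI.X k n c q t) := by
    intro i j p
    rw [hα i, hα j, Finset.sum_mul_sum, map_sum]
    refine Finset.sum_congr rfl fun s _ => ?_
    rw [map_sum]
    refine Finset.sum_congr rfl fun t _ => ?_
    rw [smul_mul_assoc, mul_smul_comm, map_smul, map_smul, smul_eq_mul, smul_eq_mul]
    ring
  -- diagonal coefficient relation
  have R1 : ∀ i j : Fin c, i < j → ∀ a : Fin c, α i a * α j a = 0 := by
    intro i j hij a
    have h0 := congrArg (QAux.lam n c q hn1 (QAux.d1 a + QAux.d1 a)) (hcomm i j hij)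
    rw [map_smul, smul_eq_mul, hexp, hexp] at h0
    simp only [QAux.lam_XX hn1 hn3, mul_ite, mul_zero] at h0
    rw [QAux.double_sum_eval_diag, QAux.double_sum_eval_diag] at h0
    simp only [lt_irrefl, if_false, pow_zero, mul_one] at h0
    have hfac : (1 - q) * (α i a * α j a) = 0 := by linear_combination h0
    rcases mul_eq_zero.mp hfac with h | h
    · exact absurd (sub_eq_zero.mp h).symm hq1
    · exact h
  -- off-diagonal coefficient relation
  have R2 : ∀ i j : Fin c, i < j → ∀ a b : Fin c, a < b → α i b * α j a = 0 := by
    intro i j hij a b hab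
    have h0 := congrArg (QAux.lam n c q hn1 (QAux.d1 a + QAux.d1 b)) (hcomm i j hij)
    rw [map_smul, smul_eq_mul, hexp, hexp] at h0
    simp only [QAux.lam_XX hn1 hn3, mul_ite, mul_zero] at h0
    rw [QAux.double_sum_eval hab.ne, QAux.double_sum_eval hab.ne] at h0
    simp only [if_pos hab, if_neg (asymm hab), pow_one, pow_zero, mul_one] at h0
    have hfac : (1 - q * q) * (α i b * α j a) = 0 := by linear_combination h0
    rcases mul_eq_zero.mp hfac with h | h
    · exact absurd (sub_eq_zero.mp h).symm hq2
    · exact h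
  -- linear independence of the generators
  have hzero : ∀ v : Fin c → k, (∑ j, v j • QCI.X k n c q j) = 0 → v = 0 := by
    intro v hv
    funext j0
    have h0 := congrArg (QAux.lam n c q hn1 (QAux.d1 j0)) hv
    rw [map_sum, map_zero] at h0
    simp only [map_smul, smul_eq_mul, QAux.lam_X hn1 hn2, mul_ite, mul_one, mul_zero,
      Finset.sum_ite_eq', Finset.mem_univ, if_true] at h0
    simpa using h0
  -- the coefficient matrix
  set M : Matrix (Fin c) (Fin c) k := Matrix.of (fun a j => α j a) with hM
  have hpsisum : ∀ u : Fin c → k,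
      psi (∑ j, u j • QCI.X k n c q j) = ∑ a, M.mulVec u a • QCI.X k n c q a := by
    intro u
    rw [map_sum]
    have h1 : ∀ j, psi (u j • QCI.X k n c q j) = ∑ a, (α j a * u j) • QCI.X k n c q a := by
      intro j
      rw [map_smul, hα j, Finset.smul_sum]
      refine Finset.sum_congr rfl fun a _ => ?_
      rw [smul_smul, mul_comm]
    rw [Finset.sum_congr rfl fun j _ => h1 j, Finset.sum_comm]
    refine Finset.sum_congr rfl fun a _ => ?_
    rw [← Finset.sum_smul]
    congr 1
  have hMinj : Function.Injective M.mulVec := by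
    intro v w hvw
    have hcore : ∀ u : Fin c → k, M.mulVec u = 0 → u = 0 := by
      intro u hu
      apply hzero
      apply psi.injective
      rw [map_zero, hpsisum u, hu]
      exact Finset.sum_eq_zero fun a _ => by rw [Pi.zero_apply, zero_smul]
    have hsub : M.mulVec (v - w) = 0 := by
      rw [Matrix.mulVec_sub, hvw, sub_self]
    exact sub_eq_zero.mp (hcore (v - w) hsub)
  have hunit : IsUnit M := Matrix.mulVec_injective_iff_isUnit.mp hMinj
  have hvinj : Function.Injective M.vecMul := Matrix.vecMul_injective_iff_isUnit.mpr hunit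
  -- each column has a nonzero entry
  have hex : ∀ j : Fin c, ∃ a, α j a ≠ 0 := by
    intro j
    by_contra hcon
    push_neg at hcon
    have h0 : psi (QCI.X k n c q j) = 0 := by
      rw [hα j]
      exact Finset.sum_eq_zero fun a _ => by rw [hcon a, zero_smul]
    have hXj : QCI.X k n c q j = 0 := by
      apply psi.injective
      rw [h0, map_zero]
    have h1 := congrArg (QAux.lam n c q hn1 (QAux.d1 j)) hXj
    rw [map_zero, QAux.lam_X hn1 hn2, if_pos rfl] at h1
    exact one_ne_zero h1
  -- each row has at most one nonzero entry
  have hR1' : ∀ (j j' : Fin c), j ≠ j' → ∀ a, α j a ≠ 0 → α j' a = 0 := by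
    intro j j' hne a ha
    rcases lt_or_gt_of_ne hne with h | h
    · rcases mul_eq_zero.mp (R1 j j' h a) with h0 | h0
      · exact absurd h0 ha
      · exact h0
    · rcases mul_eq_zero.mp (R1 j' j h a) with h0 | h0
      · exact h0
      · exact absurd h0 ha
  -- each column has at most one nonzero entry
  have huniq : ∀ (j : Fin c) (a b : Fin c), α j a ≠ 0 → α j b ≠ 0 → a = b := by
    intro j a b ha hb
    by_contra hab
    set w : Fin c → k := fun x => if x = a then α j b else if x = b then -(α j a) else 0 with hw
    have hw0 : M.vecMul w = M.vecMul 0 := by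
      funext j'
      rw [Matrix.zero_vecMul, Pi.zero_apply]
      have hval : M.vecMul w j' = α j b * α j' a + (-(α j a)) * α j' b := by
        simp only [Matrix.vecMul, dotProduct, hM, Matrix.of_apply, hw, ite_mul, zero_mul,
          neg_mul]
        rw [QAux.sum_two hab (fun x => α j b * α j' x) (fun x => -(α j a * α j' x))]
      rw [hval]
      by_cases hj' : j' = j
      · subst hj'
        ring
      · rw [hR1' j j' (fun h => hj' h.symm) a ha, hR1' j j' (fun h => hj' h.symm) b hb]
        ring
    have hw00 := hvinj hw0
    have hwa := congrFun hw00 a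
    simp only [hw, if_pos rfl, Pi.zero_apply] at hwa
    exact hb hwa
  choose σ hσ using hex
  have hσinj : Function.Injective σ := by
    intro i j hij
    by_contra hne
    exact hσ j (by rw [← hij]; exact hR1' i j hne (σ i) (hσ i))
  have hσmono : StrictMono σ := by
    intro i j hij
    have hne : σ i ≠ σ j := fun h => hij.ne (hσinj h)
    rcases lt_or_gt_of_ne hne with h | h
    · exact h
    · exfalso
      rcases mul_eq_zero.mp (R2 i j hij (σ j) (σ i) h) with h0 | h0
      · exact hσ i h0
      · exact hσ j h0
  have hσid : σ = id := by
    apply (StrictMono.range_inj hσmono strictMono_id).mp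
    rw [Set.range_id]
    exact Set.range_eq_univ.mpr (Finite.injective_iff_surjective.mp hσinj)
  intro i0
  have hii : α i0 i0 ≠ 0 := by
    have := hσ i0
    rwa [show σ i0 = i0 from congrFun hσid i0] at this
  refine ⟨α i0 i0, hii, ?_⟩
  rw [hα i0, Finset.sum_eq_single i0]
  · intro b _ hb
    have hb0 : α i0 b = 0 := by
      by_contra hbz
      exact hb (huniq i0 b i0 hbz hii)
    rw [hb0, zero_smul]
  · intro h
    exact absurd (Finset.mem_univ i0) h

end
end

section
/- Let M be a d-dimensional module over A^c_q and 0 < g ≤ d. If the binomial coefficient squared (d choose g)^2 < c, then the linear operators u_λ : M → M (λ ∈ k^c nonzero) cannot all have rank exactly g. Consequently, there is no d-dimensional A^c_q-module of constant rank g > 0 when (d choose g)^2 < c. -/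
noncomputable section

/-- The Jacobson radical of `A_q^c`, as the two-sided ideal generated by `x_1, …, x_c`,
viewed as a `k`-subspace. -/

private lemma aux_le_choose : ∀ d : ℕ, ∀ g : ℕ, 1 ≤ g → g < d → d ≤ d.choose g
  | 0, g, _, h => absurd h (Nat.not_lt_zero g)
  | d+1, 0, h1, _ => absurd h1 (by omega)
  | d+1, g+1, _, h => by
    rcases eq_or_lt_of_le (Nat.lt_succ_iff.mp h) with he | hlt
    · subst he; rw [Nat.choose_succ_self_right]
    · rw [Nat.choose_succ_succ]
      show d + 1 ≤ d.choose g + d.choose (g + 1)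
      have h1 : 1 ≤ d.choose g := Nat.choose_pos (by omega)
      have h2 : d ≤ d.choose (g+1) := aux_le_choose d (g+1) (by omega) hlt
      omega

theorem stmt19 (k : Type) [Field k] (n c : ℕ) (hn : 2 ≤ n) (hc : 2 ≤ c) (q : k)
    (hq : IsPrimitiveRoot q (nprime k n)) (dd g : ℕ) (hg0 : 0 < g) (hgd : g ≤ dd)
    (hsmall : (Nat.choose dd g) ^ 2 < c)
    (V : Type) [AddCommGroup V] [Module k V] [FiniteDimensional k V]
    (hV : Module.finrank k V = dd)
    (rho : QCI k n c q →ₐ[k] Module.End k V) :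
    ¬ ∀ lam : Fin c → k, lam ≠ 0 →
        Module.finrank k (LinearMap.range (rho (QCI.u k n c q lam))) = g := by
  intro hall
  have hd1 : 1 ≤ dd := le_trans hg0 hgd
  have hrho : ∀ lam : Fin c → k,
      rho (QCI.u k n c q lam) = ∑ i, lam i • rho (QCI.X k n c q i) := by
    intro lam
    rw [QCI.u, map_sum]
    simp
  rcases eq_or_lt_of_le hgd with he | hlt
  · -- g = dd : nilpotent operator cannot be surjective
    have i0 : Fin c := ⟨0, by omega⟩
    set lam : Fin c → k := Pi.single i0 1 with hlam
    have hlam0 : lam ≠ 0 := by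
      intro h0
      have := congrFun h0 i0
      simp [hlam] at this
    have hu : QCI.u k n c q lam = QCI.X k n c q i0 := by
      rw [QCI.u, Finset.sum_eq_single i0]
      · simp [hlam]
      · intro b _ hb
        simp [hlam, Pi.single_apply, hb]
      · simp
    have hXn : QCI.X k n c q i0 ^ n = 0 := by
      rw [QCI.X, ← map_pow]
      have := RingQuot.mkAlgHom_rel k
        (QCIRel.pow (k := k) (n := n) (c := c) (q := q) i0)
      simpa using this
    have hr := hall lam hlam0
    rw [hu] at hr
    have hrange : LinearMap.range (rho (QCI.X k n c q i0)) = ⊤ := by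
      apply Submodule.eq_top_of_finrank_eq
      rw [hr, hV, he]
    have hsurj : Function.Surjective ⇑(rho (QCI.X k n c q i0)) :=
      LinearMap.range_eq_top.mp hrange
    have hsn : Function.Surjective ⇑(rho (QCI.X k n c q i0) ^ n) := by
      rw [Module.End.coe_pow]
      exact hsurj.iterate n
    rw [← map_pow, hXn, map_zero] at hsn
    have hnt : Nontrivial V := by
      apply Module.nontrivial_of_finrank_pos (R := k)
      omega
    obtain ⟨v, hv⟩ := exists_ne (0 : V)
    obtain ⟨w, hw⟩ := hsn v
    simp at hw
    exact hv hw.symm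
  · -- 0 < g < dd : dimension count via injectivity of lam ↦ rho (u lam)
    have hdc : dd ≤ dd.choose g := aux_le_choose dd g hg0 hlt
    have hdd2 : dd * dd < c := by
      have h1 : dd * dd ≤ dd.choose g ^ 2 := by
        rw [pow_two]
        exact Nat.mul_le_mul hdc hdc
      omega
    set Φ : (Fin c → k) →ₗ[k] Module.End k V :=
      ∑ i : Fin c,
        (LinearMap.proj i : (Fin c → k) →ₗ[k] k).smulRight (rho (QCI.X k n c q i))
      with hΦdef
    have hΦ : ∀ lam, Φ lam = rho (QCI.u k n c q lam) := by
      intro lam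
      rw [hrho, hΦdef]
      simp [LinearMap.sum_apply]
    have hinj : Function.Injective ⇑Φ := by
      apply LinearMap.ker_eq_bot.mp
      rw [LinearMap.ker_eq_bot']
      intro lam h0
      by_contra hlam
      have hr := hall lam hlam
      rw [← hΦ, h0, LinearMap.range_zero] at hr
      rw [finrank_bot] at hr
      omega
    have hle : Module.finrank k (Fin c → k) ≤ Module.finrank k (Module.End k V) :=
      LinearMap.finrank_le_finrank_of_injective hinj
    rw [Module.finrank_fin_fun] at hle
    have hEnd : Module.finrank k (Module.End k V) = dd * dd := by
      rw [Module.finrank_linearMap, hV]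
    omega


end
end
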